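/- Pathwise dominance principle for the discrete Bass realization: let p^A, p^B : Fin M → ℝ and q^A, q^B : Fin M → Fin M → ℝ be two sets of nonnegative rates with zero diagonal such that p^A_j ≤ p^B_j for all j and q^A_{k,j} ≤ q^B_{k,j} for all k, j. Let X^A(ω) and X^B(ω) be the discrete Bass realizations built from (p^A, q^A) and (p^B, q^B) respectively, with the same Δt and the same ω : Fin N → Fin M → ℝ. Then for every step n ≤ N and every node j, X^A(ω) n j = true implies X^B(ω) n j = true (the dominated network adopts pathwise no faster than the dominating one). -/
import Mathlib


open MeasureTheory

/-- Discrete Bass realization: adoption state of node `j` after `n` time steps,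
for the realization `ω : Fin N → Fin M → ℝ` of the uniform variables. -/
noncomputable def bassX (M N : ℕ) (dt : ℝ) (p : Fin M → ℝ) (q : Fin M → Fin M → ℝ)
    (ω : Fin N → Fin M → ℝ) : ℕ → Fin M → Bool
  | 0, _ => false
  | n + 1, j =>
    if h : n < N then
      bassX M N dt p q ω n j ||
        (if ω ⟨n, h⟩ j ≤
            (p j + ∑ k, q k j * (if bassX M N dt p q ω n k = true then (1 : ℝ) else 0)) * dt
          then true else false)
    else
      bassX M N dt p q ω n j

/-- Nonadoption indicator of node `i` after `N` steps. -/
noncomputable def bassG (M N : ℕ) (dt : ℝ) (p : Fin M → ℝ) (q : Fin M → Fin M → ℝ)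
    (i : Fin M) (ω : Fin N → Fin M → ℝ) : ℝ :=
  if bassX M N dt p q ω N i = false then 1 else 0

/-- Uniform probability measure on the cube `[0,1]^{N×M}`. -/
noncomputable def cubeMeasure (N M : ℕ) : Measure (Fin N → Fin M → ℝ) :=
  Measure.pi fun _ => Measure.pi fun _ => volume.restrict (Set.Icc (0 : ℝ) 1)


/-- Pathwise dominance principle: if the rates of network `A` are dominated by
those of network `B`, then with the same `ω` and `Δt`, network `A` adopts
pathwise no faster than network `B`. -/
theorem bass_pathwise_dominance
    (M N : ℕ) (hM : 1 ≤ M) (hN : 1 ≤ N) (dt : ℝ) (hdt : 0 < dt)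
    (pA pB : Fin M → ℝ) (hpA : ∀ j, 0 ≤ pA j) (hpB : ∀ j, 0 ≤ pB j)
    (qA qB : Fin M → Fin M → ℝ)
    (hqA : ∀ k j, 0 ≤ qA k j) (hqB : ∀ k j, 0 ≤ qB k j)
    (hqAdiag : ∀ j, qA j j = 0) (hqBdiag : ∀ j, qB j j = 0)
    (hpAB : ∀ j, pA j ≤ pB j) (hqAB : ∀ k j, qA k j ≤ qB k j)
    (ω : Fin N → Fin M → ℝ) :
    ∀ n, n ≤ N → ∀ j : Fin M,
      bassX M N dt pA qA ω n j = true → bassX M N dt pB qB ω n j = true := by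
  intro n
  induction n with
  | zero => intro _ j h; simp [bassX] at h
  | succ n ih =>
    intro hn j hA
    have hn' : n ≤ N := Nat.le_of_succ_le hn
    have hlt : n < N := Nat.lt_of_succ_le hn
    rw [bassX] at hA ⊢
    rw [dif_pos hlt] at hA ⊢
    rcases Bool.or_eq_true_iff.mp hA with h | h
    · exact Bool.or_eq_true_iff.mpr (Or.inl (ih hn' j h))
    · by_cases hω : ω ⟨n, hlt⟩ j ≤
        (pA j + ∑ k, qA k j * (if bassX M N dt pA qA ω n k = true then (1 : ℝ) else 0)) * dt
      · have hle : (pA j + ∑ k, qA k j * (if bassX M N dt pA qA ω n k = true then (1 : ℝ) else 0)) * dt ≤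
            (pB j + ∑ k, qB k j * (if bassX M N dt pB qB ω n k = true then (1 : ℝ) else 0)) * dt := by
          apply mul_le_mul_of_nonneg_right _ hdt.le
          apply add_le_add (hpAB j)
          apply Finset.sum_le_sum
          intro k _
          by_cases hk : bassX M N dt pA qA ω n k = true
          · rw [if_pos hk, if_pos (ih hn' k hk)]
            simpa using hqAB k j
          · rw [if_neg hk]
            simp only [mul_ite, mul_one, mul_zero]
            split
            · exact hqB k j
            · exact le_rfl
        have : ω ⟨n, hlt⟩ j ≤
            (pB j + ∑ k, qB k j * (if bassX M N dt pB qB ω n k = true then (1 : ℝ) else 0)) * dt :=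
          hω.trans hle
        exact Bool.or_eq_true_iff.mpr (Or.inr (if_pos this))
      · rw [if_neg hω] at h
        simp at h
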